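/- Let K = ℂ((x)) and M a finite-dimensional differential module over K. M is regular if and only if for every m ∈ M, the ℂ[[x]]-submodule of M generated by { (x∂)^k m : k ≥ 0 } is finitely generated over ℂ[[x]]. -/

import Mathlib

noncomputable section

open scoped TensorProduct

/-- `K = ℂ((x))`, the field of formal Laurent series. -/
abbrev K : Type := LaurentSeries ℂ

/-- `O = ℂ[[x]]`, the ring of formal power series. -/
abbrev O : Type := PowerSeries ℂ

/-- The formal derivative `f ↦ f'` on `ℂ((x))`. -/
def der (f : K) : K := LaurentSeries.derivative ℂ f

/-- The element `x ∈ ℂ((x))`. -/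
def xK : K := algebraMap O K PowerSeries.X

/-- Any `ℂ((x))`-module is a `ℂ[[x]]`-module by restriction of scalars. -/
instance (M : Type*) [AddCommGroup M] [Module K M] : Module O M :=
  Module.compHom M (algebraMap O K)

/-- A differential-module structure on a `K`-vector space: an additive map satisfying the
Leibniz rule with respect to `d/dx` on `K = ℂ((x))`. -/
def IsDerivation {M : Type*} [AddCommGroup M] [Module K M] (D : M → M) : Prop :=
  (∀ a b : M, D (a + b) = D a + D b) ∧ ∀ (f : K) (m : M), D (f • m) = der f • m + f • D m

/-- A `ℂ[[x]]`-lattice in a `K`-vector space: a finitely generated `ℂ[[x]]`-submodule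
spanning `M` over `K`. -/
def IsLattice {M : Type*} [AddCommGroup M] [Module K M] (L : Submodule O M) : Prop :=
  L.FG ∧ Submodule.span K (L : Set M) = ⊤

/-- A differential module `(M, ∂)` over `ℂ((x))` is regular if it contains a
`ℂ[[x]]`-lattice stable under `x∂`. -/
def IsRegularDiff {M : Type*} [AddCommGroup M] [Module K M] (D : M → M) : Prop :=
  ∃ L : Submodule O M, IsLattice L ∧ ∀ m ∈ L, xK • D m ∈ L

/-! ### Auxiliary lemmas -/

lemma osmul {M : Type*} [AddCommGroup M] [Module K M] (r : O) (m : M) :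
    r • m = (algebraMap O K r) • m := rfl

lemma xK_eq : xK = HahnSeries.single (1:ℤ) (1:ℂ) := by
  rw [xK]
  rw [show ⇑(algebraMap O K) = HahnSeries.ofPowerSeries ℤ ℂ from rfl]
  exact HahnSeries.ofPowerSeries_X

lemma der_single (a : ℤ) (c : ℂ) :
    der (HahnSeries.single a c) = HahnSeries.single (a - 1) (a • c) := by
  rw [der, LaurentSeries.derivative_apply, LaurentSeries.hasseDeriv_single,
    Ring.choose_one_right]
  norm_num

lemma xK_mul_der_single (a : ℤ) (c : ℂ) :
    xK * der (HahnSeries.single a c) = HahnSeries.single a (a • c) := by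
  rw [der_single, xK_eq, HahnSeries.single_mul_single, one_mul,
    show (1:ℤ) + (a - 1) = a by ring]

lemma coe_coeff_neg (g : O) (n : ℤ) (h : n < 0) :
    (algebraMap O K g).coeff n = 0 := by
  rw [show ⇑(algebraMap O K) = HahnSeries.ofPowerSeries ℤ ℂ from rfl,
    HahnSeries.ofPowerSeries_apply]
  apply HahnSeries.embDomain_notin_range
  rintro ⟨m, hm⟩
  simp only [Nat.castOrderEmbedding_apply] at hm
  omega

lemma xK_mul_der_coe (g : O) :
    ∃ g' : O, xK * der (algebraMap O K g) = algebraMap O K g' := by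
  refine ⟨PowerSeries.mk fun n => (n : ℂ) * PowerSeries.coeff n g, ?_⟩
  ext n
  have hL : (xK * der (algebraMap O K g)).coeff n
      = (n : ℂ) • (algebraMap O K g).coeff n := by
    rw [xK_eq, der, LaurentSeries.derivative_apply]
    conv_lhs => rw [show n = (n - 1) + 1 by ring]
    rw [HahnSeries.coeff_single_mul_add, one_mul, LaurentSeries.hasseDeriv_coeff,
      show n - 1 + ((1:ℕ):ℤ) = n by push_cast; ring, Ring.choose_one_right, zsmul_eq_mul, smul_eq_mul]
  rcases lt_or_ge n 0 with hn | hn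
  · rw [hL, coe_coeff_neg _ _ hn, coe_coeff_neg _ _ hn, smul_zero]
  · obtain ⟨m, rfl⟩ := Int.eq_ofNat_of_zero_le hn
    rw [hL]
    have h1 : (algebraMap O K g).coeff (m : ℤ) = PowerSeries.coeff m g :=
      LaurentSeries.coeff_coe_powerSeries g m
    have h2 : (algebraMap O K (PowerSeries.mk fun n => (n : ℂ) * PowerSeries.coeff n g)).coeff (m : ℤ)
        = (m : ℂ) * PowerSeries.coeff m g :=
      (LaurentSeries.coeff_coe_powerSeries _ m).trans (PowerSeries.coeff_mk m _)
    rw [h1, h2, smul_eq_mul]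
    push_cast
    ring

section DM

variable {M : Type*} [AddCommGroup M] [Module K M] {D : M → M}

lemma D_zero (hD : IsDerivation D) : D 0 = 0 := by
  have h := hD.1 0 0
  rw [add_zero] at h
  exact left_eq_add.mp h

lemma T_smul (hD : IsDerivation D) (f : K) (m : M) :
    xK • D (f • m) = (xK * der f) • m + f • (xK • D m) := by
  rw [hD.2, smul_add, smul_smul, smul_smul, smul_smul, mul_comm xK f]

/-- If every element of `S` is mapped into `span O S` by `x∂`, then `span O S` is stable. -/
lemma span_stable (hD : IsDerivation D) (S : Set M)
    (h : ∀ s ∈ S, xK • D s ∈ Submodule.span O S) :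
    ∀ m ∈ Submodule.span O S, xK • D m ∈ Submodule.span O S := by
  intro m hm
  induction hm using Submodule.span_induction with
  | mem x hx => exact h x hx
  | zero => rw [D_zero hD, smul_zero]; exact zero_mem _
  | add x y hx hy ihx ihy => rw [hD.1, smul_add]; exact add_mem ihx ihy
  | smul r x hx ih =>
      obtain ⟨r', hr'⟩ := xK_mul_der_coe r
      rw [osmul, T_smul hD, hr', ← osmul, ← osmul]
      exact add_mem (Submodule.smul_mem _ _ hx) (Submodule.smul_mem _ _ ih)

/-- Scalar multiplication by a fixed `c : K` as an `O`-linear map. -/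
def lsmulK (c : K) : M →ₗ[O] M where
  toFun m := c • m
  map_add' := smul_add c
  map_smul' r m := by rw [RingHom.id_apply, osmul, osmul, smul_comm]

@[simp] lemma lsmulK_apply (c : K) (m : M) : (lsmulK c : M →ₗ[O] M) m = c • m := rfl

end DM

/-- **Saturation characterization of regularity.** -/
theorem regular_iff_saturation_fg
    (M : Type) [AddCommGroup M] [Module K M] [FiniteDimensional K M]
    (D : M → M) (hD : IsDerivation D) :
    IsRegularDiff D ↔
      ∀ m : M, (Submodule.span O (Set.range fun k : ℕ => (fun x => xK • D x)^[k] m)).FG := by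
  set T : M → M := fun x => xK • D x with hT
  constructor
  · -- regular ⇒ each saturation is f.g.
    rintro ⟨L, ⟨hLfg, hLspan⟩, hstab⟩ m
    -- write m as a K-combination of elements of L
    have hm : m ∈ Submodule.span K (L : Set M) := hLspan ▸ Submodule.mem_top
    obtain ⟨n, f, g, hrep⟩ := Submodule.mem_span_set'.mp hm
    -- the denominator exponent
    obtain ⟨N, hNb⟩ : ∃ N : ℕ, ∀ i : Fin n, (f i).order.natAbs ≤ N :=
      ⟨Finset.univ.sup fun i : Fin n => (f i).order.natAbs,
        fun i => Finset.le_sup (f := fun i : Fin n => (f i).order.natAbs) (Finset.mem_univ i)⟩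
    set c : K := HahnSeries.single (-(N:ℤ)) (1:ℂ) with hc
    set L' : Submodule O M := L.map (lsmulK c) with hL'
    have hL'fg : L'.FG := hLfg.map _
    -- stability of L' under T
    have hstab' : ∀ y ∈ L', T y ∈ L' := by
      rintro y ⟨l, hl, rfl⟩
      have key : xK • D (c • l) = c • ((PowerSeries.C (-(N:ℂ))) • l + xK • D l) := by
        rw [T_smul hD c l, hc, xK_mul_der_single]
        rw [smul_add, osmul]
        congr 1
        rw [smul_smul]
        congr 1
        rw [show (algebraMap O K) (PowerSeries.C (-(N:ℂ)))
            = HahnSeries.single (0:ℤ) (-(N:ℂ)) by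
          rw [show ⇑(algebraMap O K) = HahnSeries.ofPowerSeries ℤ ℂ from rfl,
            HahnSeries.ofPowerSeries_C, HahnSeries.C_apply]]
        rw [HahnSeries.single_mul_single, add_zero, one_mul]
        norm_num
      refine ⟨(PowerSeries.C (-(N:ℂ))) • l + xK • D l, ?_, ?_⟩
      · exact add_mem (Submodule.smul_mem _ _ hl) (hstab l hl)
      · exact key.symm
    -- m itself lies in L'
    have hmL' : m ∈ L' := by
      have hrepr : m = c • (∑ i, ((PowerSeries.X ^ (((N:ℤ) + (f i).order).toNat)
          * (f i).powerSeriesPart : O)) • (g i : M)) := by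
        rw [Finset.smul_sum]
        rw [← hrep]
        refine Finset.sum_congr rfl fun i _ => ?_
        rw [osmul, smul_smul]
        congr 1
        have hord : (((N:ℤ) + (f i).order).toNat : ℤ) = (N:ℤ) + (f i).order := by
          have := hNb i
          omega
        rw [map_mul, map_pow]
        rw [show (algebraMap O K) PowerSeries.X = HahnSeries.single (1:ℤ) (1:ℂ) from xK_eq ▸ rfl]
        rw [HahnSeries.single_pow, one_pow, nsmul_eq_mul, mul_one]
        rw [← mul_assoc, HahnSeries.single_mul_single, one_mul]
        rw [show -(N:ℤ) + ((((N:ℤ) + (f i).order).toNat : ℕ) : ℤ) = (f i).order by omega]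
        exact ((f i).single_order_mul_powerSeriesPart).symm
      rw [hrepr]
      exact ⟨_, Submodule.sum_mem _ fun i _ => Submodule.smul_mem _ _ (g i).2, rfl⟩
    -- hence all iterates lie in L'
    have hiter : ∀ k : ℕ, T^[k] m ∈ L' := by
      intro k
      induction k with
      | zero => exact hmL'
      | succ k ih => rw [Function.iterate_succ_apply']; exact hstab' _ ih
    -- conclude by Noetherianity
    have hle : Submodule.span O (Set.range fun k : ℕ => T^[k] m) ≤ L' :=
      Submodule.span_le.mpr (by rintro _ ⟨k, rfl⟩; exact hiter k)
    have : IsNoetherian O L' := isNoetherian_of_fg_of_noetherian L' hL'fg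
    have heq : Submodule.map L'.subtype
        ((Submodule.span O (Set.range fun k : ℕ => T^[k] m)).comap L'.subtype)
        = Submodule.span O (Set.range fun k : ℕ => T^[k] m) := by
      rw [Submodule.map_comap_subtype]
      exact inf_eq_right.mpr hle
    rw [← heq]
    exact Submodule.FG.map _ (IsNoetherian.noetherian _)
  · -- each saturation f.g. ⇒ regular
    intro hfg
    set b := Module.finBasis K M with hb
    set S : Set M := ⋃ i, Set.range fun k : ℕ => T^[k] (b i) with hS
    refine ⟨Submodule.span O S, ⟨?_, ?_⟩, ?_⟩
    · rw [hS, Submodule.span_iUnion]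
      exact Submodule.fg_iSup _ fun i => hfg (b i)
    · rw [eq_top_iff, ← b.span_eq]
      refine Submodule.span_le.mpr fun x hx => ?_
      obtain ⟨i, rfl⟩ := hx
      have : b i ∈ S := Set.mem_iUnion.mpr ⟨i, ⟨0, rfl⟩⟩
      exact Submodule.span_le.mp le_rfl (Submodule.subset_span this)
    · intro m hm
      refine span_stable hD S (fun s hs => ?_) m hm
      obtain ⟨i, k, rfl⟩ := by
        simpa only [hS, Set.mem_iUnion, Set.mem_range] using hs
      have : xK • D (T^[k] (b i)) = T^[k+1] (b i) := by
        rw [Function.iterate_succ_apply']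
      rw [this]
      exact Submodule.subset_span (Set.mem_iUnion.mpr ⟨i, ⟨k+1, rfl⟩⟩)
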